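/- Let N ≥ 2 be an integer and let p⁻ be a real constant with 1 < p⁻ < N. Let C̃ > 0, L > 0, M > 0, and let D : (0,∞) → [0,∞) be a function such that for every μ₀ > 0 and every k > 0, D(μ₀) ≤ (C̃·M·k + L) · μ₀^{−p⁻/(p⁻−1)} + (C̃·(M·k)^{N/(N−p⁻)} + C̃) · k^{−N p⁻/(N−p⁻)}. Then there exists a constant C₁ > 0 depending only on N, p⁻, C̃ and L such that for every μ₀ > 0, μ₀ · D(μ₀)^{(N−1)/N} ≤ C₁ · M + C₁ · μ₀^{(p⁻−N)/(N p⁻−N)}. -/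

import Mathlib

lemma my_rpow_add_le_add_rpow {x y p : ℝ} (hx : 0 ≤ x) (hy : 0 ≤ y)
    (hp : 0 ≤ p) (hp1 : p ≤ 1) : (x + y) ^ p ≤ x ^ p + y ^ p := by
  have h := NNReal.rpow_add_le_add_rpow x.toNNReal y.toNNReal hp hp1
  have h2 := NNReal.coe_le_coe.mpr h
  push_cast at h2
  rwa [Real.coe_toNNReal _ hx, Real.coe_toNNReal _ hy] at h2

set_option maxHeartbeats 1000000 in
theorem stmt_1 (N : ℕ) (hN : 2 ≤ N) (pm : ℝ) (hpm1 : 1 < pm) (hpmN : pm < (N : ℝ))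
    (Ct L M : ℝ) (hCt : 0 < Ct) (hL : 0 < L) (hM : 0 < M)
    (D : ℝ → ℝ) (hD_nonneg : ∀ μ₀ : ℝ, 0 < μ₀ → 0 ≤ D μ₀)
    (hyp : ∀ μ₀ : ℝ, 0 < μ₀ → ∀ k : ℝ, 0 < k →
      D μ₀ ≤ (Ct * M * k + L) * μ₀ ^ (-pm / (pm - 1))
        + (Ct * (M * k) ^ ((N : ℝ) / ((N : ℝ) - pm)) + Ct) * k ^ (-(N : ℝ) * pm / ((N : ℝ) - pm))) :
    ∃ C₁ : ℝ, 0 < C₁ ∧ ∀ μ₀ : ℝ, 0 < μ₀ →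
      μ₀ * D μ₀ ^ (((N : ℝ) - 1) / (N : ℝ))
        ≤ C₁ * M + C₁ * μ₀ ^ ((pm - (N : ℝ)) / ((N : ℝ) * pm - (N : ℝ))) := by
  have hn2 : (2:ℝ) ≤ (N:ℝ) := by exact_mod_cast hN
  set n : ℝ := (N : ℝ) with hn
  clear_value n
  have hn1 : (1:ℝ) < n := by linarith
  have hn0 : (0:ℝ) < n := by linarith
  have hp0 : (0:ℝ) < pm := by linarith
  have hp1 : (0:ℝ) < pm - 1 := by linarith
  have hnp : (0:ℝ) < n - pm := by linarith
  have hd : (0:ℝ) < n*pm + n - pm := by nlinarith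
  have hn1' : n - 1 ≠ 0 := by linarith
  have hp1' : pm - 1 ≠ 0 := ne_of_gt hp1
  have hnp' : n - pm ≠ 0 := ne_of_gt hnp
  have hd' : n*pm + n - pm ≠ 0 := ne_of_gt hd
  have hn0' : n ≠ 0 := ne_of_gt hn0
  have hnd0 : (0:ℝ) < n*pm - n := by nlinarith
  have hnd : n*pm - n ≠ 0 := ne_of_gt hnd0
  set θ : ℝ := (n-1)/n with hθdef
  have hθ0 : 0 < θ := div_pos (by linarith) hn0
  have hθ1 : θ ≤ 1 := by rw [hθdef, div_le_one hn0]; linarith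
  set e : ℝ := (pm - n)/(n*pm - n) with hedef
  clear_value θ e
  refine ⟨2*(2*Ct)^θ + L^θ + 1, by positivity, fun μ₀ hμ => ?_⟩
  set mα : ℝ := -pm/(pm-1) with hmα
  set γ : ℝ := n/(n-pm) with hγ
  set mβ : ℝ := -n*pm/(n-pm) with hmβ
  set q : ℝ := n/(n-1) with hq
  set s : ℝ := n*pm/(n*pm+n-pm) with hs
  set t : ℝ := n*pm^2/((pm-1)*(n*pm+n-pm)) with ht
  set u : ℝ := 1/(n-1) with hu
  set v : ℝ := (n-pm)/((n-1)*(pm-1)) with hv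
  set u' : ℝ := -((n-pm)/(n*pm+n-pm)) with hu'
  set v' : ℝ := (n-pm)*pm/((pm-1)*(n*pm+n-pm)) with hv'
  set a : ℝ := M ^ u * μ₀ ^ v with hadef
  set b : ℝ := M ^ u' * μ₀ ^ v' with hbdef
  clear_value mα γ mβ q s t u v u' v' a b
  -- arithmetic facts about the exponents (proved while the context is small)
  have hγβ : γ + mβ ≤ 0 := by
    have hx : γ + mβ = -(n*(pm-1))/(n-pm) := by rw [hγ, hmβ]; ring
    rw [hx]
    exact div_nonpos_of_nonpos_of_nonneg (by nlinarith) hnp.le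
  have hβ0 : mβ ≤ 0 := by
    have hx : mβ = -(n*pm)/(n-pm) := by rw [hmβ]; ring
    rw [hx]
    exact div_nonpos_of_nonpos_of_nonneg (by nlinarith) hnp.le
  have hs0 : 0 ≤ s := by
    rw [hs]; exact le_of_lt (div_pos (by positivity) hd)
  have hw0 : 0 ≤ s*θ := mul_nonneg hs0 hθ0.le
  have hw1 : s*θ ≤ 1 := by
    rw [hs, hθdef, div_mul_div_comm, div_le_one (by positivity)]
    nlinarith
  have ha : 0 < a := by rw [hadef]; positivity
  have hb : 0 < b := by rw [hbdef]; positivity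
  have hk : 0 < a + b := by linarith
  have h1 := hyp μ₀ hμ (a+b) hk
  -- split the bound
  have h2 : (Ct*M*(a+b)+L) * μ₀ ^ mα + (Ct*(M*(a+b))^γ + Ct) * (a+b)^mβ
      = Ct*M*a*μ₀^mα + Ct*M*b*μ₀^mα + L*μ₀^mα
        + Ct*(M^γ*(a+b)^(γ+mβ)) + Ct*(a+b)^mβ := by
    rw [Real.mul_rpow hM.le hk.le, Real.rpow_add hk]
    ring
  have hmono1 : Ct*(M^γ*(a+b)^(γ+mβ)) ≤ Ct*(M^γ*a^(γ+mβ)) := by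
    have hle : (a+b)^(γ+mβ) ≤ a^(γ+mβ) :=
      Real.rpow_le_rpow_of_nonpos ha (by linarith) hγβ
    exact mul_le_mul_of_nonneg_left
      (mul_le_mul_of_nonneg_left hle (by positivity)) hCt.le
  have hmono2 : Ct*(a+b)^mβ ≤ Ct*b^mβ := by
    have hle : (a+b)^mβ ≤ b^mβ :=
      Real.rpow_le_rpow_of_nonpos hb (by linarith) hβ0
    exact mul_le_mul_of_nonneg_left hle hCt.le
  have hD2 : D μ₀ ≤ Ct*M*a*μ₀^mα + Ct*M*b*μ₀^mα + L*μ₀^mα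
      + Ct*(M^γ*a^(γ+mβ)) + Ct*b^mβ := by
    rw [h2] at h1; linarith
  -- the four equalities
  have hE1 : Ct*M*a*μ₀^mα = Ct*M^q*μ₀^(-q) := by
    rw [hadef]
    rw [show Ct*M*(M^u*μ₀^v)*μ₀^mα = Ct*(M^(1:ℝ)*M^u)*(μ₀^v*μ₀^mα) from by
      rw [Real.rpow_one]; ring]
    rw [← Real.rpow_add hM, ← Real.rpow_add hμ]
    rw [show (1:ℝ)+u = q from by rw [hu, hq]; field_simp; ring,
        show v+mα = -q from by rw [hv, hmα, hq]; field_simp; try ring]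
  have hE2 : Ct*(M^γ*a^(γ+mβ)) = Ct*M^q*μ₀^(-q) := by
    rw [hadef, Real.mul_rpow (by positivity) (by positivity),
        ← Real.rpow_mul hM.le, ← Real.rpow_mul hμ.le]
    rw [show Ct*(M^γ*(M^(u*(γ+mβ))*μ₀^(v*(γ+mβ)))) = Ct*(M^γ*M^(u*(γ+mβ)))*μ₀^(v*(γ+mβ)) from by
      ring]
    rw [← Real.rpow_add hM]
    rw [show γ+u*(γ+mβ) = q from by rw [hγ, hu, hmβ, hq]; field_simp; try ring,
        show v*(γ+mβ) = -q from by rw [hv, hγ, hmβ, hq]; field_simp; try ring]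
  have hE3 : Ct*M*b*μ₀^mα = Ct*M^s*μ₀^(-t) := by
    rw [hbdef]
    rw [show Ct*M*(M^u'*μ₀^v')*μ₀^mα = Ct*(M^(1:ℝ)*M^u')*(μ₀^v'*μ₀^mα) from by
      rw [Real.rpow_one]; ring]
    rw [← Real.rpow_add hM, ← Real.rpow_add hμ]
    rw [show (1:ℝ)+u' = s from by rw [hu', hs]; obtain ⟨d, hdd⟩ : ∃ d, n*pm+n-pm = d := ⟨_, rfl⟩; have hd0 : d ≠ 0 := hdd ▸ hd'; rw [hdd]; field_simp; subst hdd; ring,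
        show v'+mα = -t from by rw [hv', hmα, ht]; obtain ⟨d, hdd⟩ : ∃ d, n*pm+n-pm = d := ⟨_, rfl⟩; have hd0 : d ≠ 0 := hdd ▸ hd'; rw [hdd]; field_simp; subst hdd; ring]
  have hE4 : Ct*b^mβ = Ct*M^s*μ₀^(-t) := by
    rw [hbdef, Real.mul_rpow (by positivity) (by positivity),
        ← Real.rpow_mul hM.le, ← Real.rpow_mul hμ.le]
    rw [show u'*mβ = s from by rw [hu', hmβ, hs]; field_simp; try ring,
        show v'*mβ = -t from by rw [hv', hmβ, ht]; field_simp; try ring]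
    ring
  have hD3 : D μ₀ ≤ 2*(Ct*M^q*μ₀^(-q)) + L*μ₀^mα + 2*(Ct*M^s*μ₀^(-t)) := by
    linarith [hE1, hE2, hE3, hE4]
  -- raise to power θ
  have hp1q : 0 ≤ 2*(Ct*M^q*μ₀^(-q)) := by positivity
  have hp2q : 0 ≤ L*μ₀^mα := by positivity
  have hp3q : 0 ≤ 2*(Ct*M^s*μ₀^(-t)) := by positivity
  have hstep : D μ₀ ^ θ ≤ (2*(Ct*M^q*μ₀^(-q)))^θ + (L*μ₀^mα)^θ + (2*(Ct*M^s*μ₀^(-t)))^θ := by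
    have c1 : D μ₀ ^ θ ≤ (2*(Ct*M^q*μ₀^(-q)) + L*μ₀^mα + 2*(Ct*M^s*μ₀^(-t)))^θ :=
      Real.rpow_le_rpow (hD_nonneg μ₀ hμ) hD3 hθ0.le
    have c2 := my_rpow_add_le_add_rpow (x := 2*(Ct*M^q*μ₀^(-q)) + L*μ₀^mα)
      (y := 2*(Ct*M^s*μ₀^(-t))) (by positivity) hp3q hθ0.le hθ1
    have c3 := my_rpow_add_le_add_rpow hp1q hp2q hθ0.le hθ1
    linarith
  -- compute the three terms
  have hT1 : (2*(Ct*M^q*μ₀^(-q)))^θ = (2*Ct)^θ * M * μ₀^(-1:ℝ) := by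
    rw [show 2*(Ct*M^q*μ₀^(-q)) = (2*Ct)*M^q*μ₀^(-q) from by ring]
    rw [Real.mul_rpow (by positivity) (by positivity),
        Real.mul_rpow (by positivity) (by positivity),
        ← Real.rpow_mul hM.le, ← Real.rpow_mul hμ.le]
    rw [show q*θ = 1 from by rw [hq, hθdef]; field_simp; try ring,
        show -q*θ = (-1:ℝ) from by rw [hq, hθdef]; field_simp; try ring]
    rw [Real.rpow_one]
  have hT3 : (2*(Ct*M^s*μ₀^(-t)))^θ = (2*Ct)^θ * M^(s*θ) * μ₀^(-t*θ) := by
    rw [show 2*(Ct*M^s*μ₀^(-t)) = (2*Ct)*M^s*μ₀^(-t) from by ring]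
    rw [Real.mul_rpow (by positivity) (by positivity),
        Real.mul_rpow (by positivity) (by positivity),
        ← Real.rpow_mul hM.le, ← Real.rpow_mul hμ.le]
  have hT1' : μ₀ * ((2*Ct)^θ * M * μ₀^(-1:ℝ)) = (2*Ct)^θ * M := by
    rw [Real.rpow_neg_one]
    field_simp
  have hY : μ₀ * (L*μ₀^mα)^θ = L^θ * μ₀^e := by
    rw [Real.mul_rpow hL.le (by positivity), ← Real.rpow_mul hμ.le]
    rw [show μ₀ * (L^θ * μ₀^(mα*θ)) = L^θ * (μ₀^(1:ℝ) * μ₀^(mα*θ)) from by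
      rw [Real.rpow_one]; ring]
    rw [← Real.rpow_add hμ]
    rw [show (1:ℝ)+mα*θ = e from by rw [hmα, hθdef, hedef]; field_simp; try ring]
  have hμe : 0 ≤ μ₀^e := Real.rpow_nonneg hμ.le e
  have hctθ : 0 ≤ (2*Ct)^θ := by positivity
  have hT3' : μ₀ * ((2*Ct)^θ * M^(s*θ) * μ₀^(-t*θ)) ≤ (2*Ct)^θ * (M + μ₀^e) := by
    have hexp : μ₀^(1 + -t*θ) = (μ₀^e)^(1-s*θ) := by
      rw [← Real.rpow_mul hμ.le]
      congr 1
      rw [hedef, ht, hs, hθdef]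
      obtain ⟨c, hcc⟩ : ∃ c, n*pm-n = c := ⟨_, rfl⟩; have hc0 : c ≠ 0 := hcc ▸ hnd; rw [hcc]
      obtain ⟨d, hdd⟩ : ∃ d, n*pm+n-pm = d := ⟨_, rfl⟩; have hd0 : d ≠ 0 := hdd ▸ hd'; rw [hdd]; field_simp; subst hdd; ring
      subst hcc
      ring
    have hysum : μ₀ * ((2*Ct)^θ * M^(s*θ) * μ₀^(-t*θ))
        = (2*Ct)^θ * (M^(s*θ) * (μ₀^e)^(1-s*θ)) := by
      rw [← hexp, Real.rpow_add hμ, Real.rpow_one]; ring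
    rw [hysum]
    have hgm : M^(s*θ) * (μ₀^e)^(1-s*θ) ≤ (s*θ)*M + (1-s*θ)*(μ₀^e) :=
      Real.geom_mean_le_arith_mean2_weighted hw0 (by linarith) hM.le hμe (by ring)
    have hstep2 : (s*θ)*M + (1-s*θ)*(μ₀^e) ≤ M + μ₀^e := by
      linarith [mul_nonneg (sub_nonneg.2 hw1) hM.le, mul_nonneg hw0 hμe,
        mul_nonneg hw0 hM.le, mul_nonneg (sub_nonneg.2 hw1) hμe]
    exact mul_le_mul_of_nonneg_left (hgm.trans hstep2) hctθ
  -- assemble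
  have hfin : μ₀ * D μ₀ ^ θ
      ≤ μ₀ * ((2*(Ct*M^q*μ₀^(-q)))^θ + (L*μ₀^mα)^θ + (2*(Ct*M^s*μ₀^(-t)))^θ) :=
    mul_le_mul_of_nonneg_left hstep hμ.le
  have hsplit : μ₀ * ((2*(Ct*M^q*μ₀^(-q)))^θ + (L*μ₀^mα)^θ + (2*(Ct*M^s*μ₀^(-t)))^θ)
      = μ₀ * ((2*Ct)^θ * M * μ₀^(-1:ℝ)) + μ₀ * (L*μ₀^mα)^θ
        + μ₀ * ((2*Ct)^θ * M^(s*θ) * μ₀^(-t*θ)) := by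
    rw [hT1, hT3]; ring
  have hLθ : 0 ≤ L^θ := by positivity
  rw [hsplit] at hfin
  linarith [hT1', hY, hT3', hfin,
    mul_nonneg (by positivity : (0:ℝ) ≤ L^θ + 1) hM.le,
    mul_nonneg (by positivity : (0:ℝ) ≤ (2*Ct)^θ + 1) hμe]
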